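/- Normalize the measure of 𝕋 to total mass 1 and let U ∈ H²(𝕋, ℂ^{d×d}) be Hermitian-valued. Then, with 𝟏 the identity matrix viewed as a constant function in ℋ: (i) 𝓜_{−1}(U) := ∫_𝕋 L_U(𝟏) dx = −⟨U⟩; (ii) 𝓜_0(U) := ∫_𝕋 L_U²(𝟏) dx = (1/2)⟨U² − i U H U⟩ + (1/2)⟨U⟩². -/

import Mathlib

open MeasureTheory Complex Matrix
open scoped Real

noncomputable section

instance : Fact (0 < 2 * Real.pi) := ⟨by positivity⟩

/-- The torus `ℝ / 2πℤ`. -/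
abbrev Torus := AddCircle (2 * Real.pi)

/-- `d × d` complex matrices. -/
abbrev Mat (d : ℕ) := Matrix (Fin d) (Fin d) ℂ

/-- Normalized Haar measure (total mass 1) on the torus. -/
abbrev μT : Measure Torus := AddCircle.haarAddCircle

variable {d : ℕ}

/-- Entrywise `n`-th Fourier coefficient of a matrix-valued function on the torus. -/
def mcoeff (f : Torus → Mat d) (n : ℤ) : Mat d :=
  Matrix.of fun i j => fourierCoeff (fun x => f x i j) n

/-- `f ∈ L²(𝕋, ℂ^{d×d})`. -/
def InL2 (f : Torus → Mat d) : Prop :=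
  ∀ i j, MemLp (fun x => f x i j) 2 μT

/-- `f ∈ L^∞(𝕋, ℂ^{d×d})`. -/
def InLinf (f : Torus → Mat d) : Prop :=
  ∀ i j, MemLp (fun x => f x i j) ⊤ μT

/-- `f` belongs to the Sobolev space `H^k(𝕋, ℂ^{d×d})` (Fourier characterization). -/
def InHk (k : ℕ) (f : Torus → Mat d) : Prop :=
  InL2 f ∧ ∀ i j, Summable fun n : ℤ =>
    (n : ℝ) ^ (2 * k) * ‖fourierCoeff (fun x => f x i j) n‖ ^ 2

/-- `f` belongs to the Hardy space `ℋ = L²₊(𝕋, ℂ^{d×d})`: it is `L²` and all its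
negatively indexed Fourier coefficients vanish. -/
def IsHardy (f : Torus → Mat d) : Prop :=
  InL2 f ∧ ∀ n : ℤ, n < 0 → mcoeff f n = 0

/-- `g = Π_{≥0} f`, the Szegő projection of `f` onto the Hardy space. -/
def ProjPosOf (f g : Torus → Mat d) : Prop :=
  InL2 g ∧ ∀ n : ℤ, mcoeff g n = if 0 ≤ n then mcoeff f n else 0

/-- `g = Π_{<0} f = (Id - Π_{≥0}) f`. -/
def ProjNegOf (f g : Torus → Mat d) : Prop :=
  InL2 g ∧ ∀ n : ℤ, mcoeff g n = if n < 0 then mcoeff f n else 0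

/-- `g = ∂ₓ f`. -/
def DerivXOf (f g : Torus → Mat d) : Prop :=
  InL2 g ∧ ∀ n : ℤ, mcoeff g n = (Complex.I * (n : ℂ)) • mcoeff f n

/-- `g = D f` where `D = (1/i) ∂ₓ`. -/
def DOf (f g : Torus → Mat d) : Prop :=
  InL2 g ∧ ∀ n : ℤ, mcoeff g n = (n : ℂ) • mcoeff f n

/-- `g = |D| f`, the Fourier multiplier with symbol `|n|`. -/
def AbsDOf (f g : Torus → Mat d) : Prop :=
  InL2 g ∧ ∀ n : ℤ, mcoeff g n = ((|n| : ℤ) : ℂ) • mcoeff f n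

/-- `g = H f`, the Hilbert transform `H = i · sign(D)` (so that `H ∂ₓ = -|D|`). -/
def HilbertOf (f g : Torus → Mat d) : Prop :=
  InL2 g ∧ ∀ n : ℤ, mcoeff g n = (Complex.I * ((n.sign : ℤ) : ℂ)) • mcoeff f n

/-- `g = T_u f = Π_{≥0}(u f)`, the Toeplitz operator of symbol `u` applied to `f`. -/
def ToeplitzOf (u f g : Torus → Mat d) : Prop :=
  ProjPosOf (fun x => u x * f x) g

/-- `g = L_u f = D f - T_u f`, the Lax operator applied to `f`. -/
def LaxOf (u f g : Torus → Mat d) : Prop :=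
  ∃ df tf, DOf f df ∧ ToeplitzOf u f tf ∧ ∀ᵐ x ∂μT, g x = df x - tf x

/-- `g = L_u^n f`, iterates of the Lax operator. -/
def LaxIterOf (u : Torus → Mat d) : ℕ → (Torus → Mat d) → (Torus → Mat d) → Prop
  | 0, f, g => ∀ᵐ x ∂μT, g x = f x
  | n + 1, f, g => ∃ h, LaxIterOf u n f h ∧ LaxOf u h g

/-- `g = B_u f = i (T_{|D|u} - T_u²) f`. -/
def BOf (u f g : Torus → Mat d) : Prop :=
  ∃ w t1 t2 t3, AbsDOf u w ∧ ToeplitzOf w f t1 ∧ ToeplitzOf u f t2 ∧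
    ToeplitzOf u t2 t3 ∧ ∀ᵐ x ∂μT, g x = Complex.I • (t1 x - t3 x)

/-- The inner product `⟨f|g⟩ = ∫ tr (f g*)` on `L²(𝕋, ℂ^{d×d})`. -/
def hinner (f g : Torus → Mat d) : ℂ :=
  ∫ x, (f x * (g x)ᴴ).trace ∂μT

/-- The mean value `⟨f⟩` of a matrix-valued function on the torus (whose measure is
normalized to total mass 1). -/
def mint (f : Torus → Mat d) : Mat d :=
  Matrix.of fun i j => ∫ x, f x i j ∂μT

/-- Squared (Frobenius) norm of a matrix. -/
def matNormSq (M : Mat d) : ℝ := ∑ i, ∑ j, ‖M i j‖ ^ 2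

/-- Squared Sobolev `H^k` norm, via Fourier coefficients (for `k = 0` this is the
squared `L²` norm, by Parseval). -/
def sobNormSq (k : ℕ) (f : Torus → Mat d) : ℝ :=
  ∑' n : ℤ, (1 + (n : ℝ) ^ 2) ^ k * matNormSq (mcoeff f n)

/-- `f` takes Hermitian values (a.e.). -/
def IsHermitianValued (f : Torus → Mat d) : Prop :=
  ∀ᵐ x ∂μT, (f x)ᴴ = f x

/-- `t ↦ U t` is continuous from `I` into `H^k(𝕋, ℂ^{d×d})`. -/
def ContInHk (k : ℕ) (I : Set ℝ) (U : ℝ → Torus → Mat d) : Prop :=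
  ∀ t ∈ I, ∀ ε > 0, ∃ δ > 0, ∀ s ∈ I, |s - t| < δ →
    sobNormSq k (fun x => U s x - U t x) < ε

/-- `V = ∂ₜ U` on `I`, in the sense of differentiability in `L²(𝕋, ℂ^{d×d})`. -/
def HasL2DerivOn (I : Set ℝ) (U V : ℝ → Torus → Mat d) : Prop :=
  ∀ t ∈ I, ∀ ε > 0, ∃ δ > 0, ∀ s ∈ I, |s - t| < δ →
    sobNormSq 0 (fun x => U s x - U t x - (s - t) • V t x) ≤ ε * (s - t) ^ 2

/-- `U`, with time derivative `∂ₜ U = V`, solves the spin Benjamin–Ono equation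
`∂ₜ U = ∂ₓ (|D|U - U²) - i [U, |D|U]` on the time interval `I`. -/
def SolvesSBO (I : Set ℝ) (U V : ℝ → Torus → Mat d) : Prop :=
  ∀ t ∈ I, ∀ w g : Torus → Mat d, AbsDOf (U t) w →
    DerivXOf (fun x => w x - U t x * U t x) g →
    ∀ᵐ x ∂μT, V t x = g x - Complex.I • (U t x * w x - w x * U t x)

section AuxHelpers


open scoped InnerProductSpace ComplexConjugate

lemma fourierCoeff_zero'' (f : Torus → ℂ) : fourierCoeff f 0 = ∫ x, f x ∂μT := by
  simp [fourierCoeff, fourier_zero]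

lemma integrable_fourier_smul' {f : Torus → ℂ} (hf : Integrable f μT) (n : ℤ) :
    Integrable (fun t => fourier n t • f t) μT := by
  simpa [smul_eq_mul] using hf.bdd_mul (map_continuous (fourier n)).aestronglyMeasurable
    (c := 1) (Filter.Eventually.of_forall fun x => by simp [Circle.norm_coe])

lemma fourierCoeff_sub' {f g : Torus → ℂ} (hf : Integrable f μT) (hg : Integrable g μT)
    (n : ℤ) : fourierCoeff (fun x => f x - g x) n = fourierCoeff f n - fourierCoeff g n := by
  simp only [fourierCoeff, smul_sub]
  exact integral_sub (integrable_fourier_smul' hf _) (integrable_fourier_smul' hg _)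

lemma fourierCoeff_congr' {f g : Torus → ℂ} (h : f =ᵐ[μT] g) (n : ℤ) :
    fourierCoeff f n = fourierCoeff g n :=
  integral_congr_ae (h.mono fun x hx => by dsimp only; rw [hx])

lemma fourierCoeff_conj' (f : Torus → ℂ) (n : ℤ) :
    fourierCoeff (fun x => conj (f x)) n = conj (fourierCoeff f (-n)) := by
  rw [fourierCoeff, fourierCoeff, ← integral_conj]
  refine integral_congr_ae (Filter.Eventually.of_forall fun t => ?_)
  simp [smul_eq_mul, _root_.map_mul, fourier_neg, neg_neg]

lemma memLp_conj' {f : Torus → ℂ} (hf : MemLp f 2 μT) :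
    MemLp (fun x => conj (f x)) 2 μT :=
  hf.congr_norm (RCLike.continuous_conj.comp_aestronglyMeasurable hf.1)
    (Filter.Eventually.of_forall fun x => (RCLike.norm_conj _).symm)

lemma integrable_mul_L2' {f g : Torus → ℂ} (hf : MemLp f 2 μT) (hg : MemLp g 2 μT) :
    Integrable (fun x => f x * g x) μT := by
  have h : MemLp (f • g) 1 μT := hg.smul hf
  exact h.integrable le_rfl

lemma hasSum_fourier_mul' {f g : Torus → ℂ} (hf : MemLp f 2 μT) (hg : MemLp g 2 μT) :
    HasSum (fun n : ℤ => fourierCoeff f (-n) * fourierCoeff g n) (∫ x, f x * g x ∂μT) := by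
  have hfc : MemLp (fun x => conj (f x)) 2 μT := memLp_conj' hf
  set F : Lp ℂ 2 μT := hfc.toLp _ with hF
  set G : Lp ℂ 2 μT := hg.toLp _ with hG
  have key := fourierBasis.hasSum_inner_mul_inner F G
  have hFb : ∀ n : ℤ, ⟪F, fourierBasis n⟫_ℂ = fourierCoeff f (-n) := by
    intro n
    rw [← inner_conj_symm, ← fourierBasis.repr_apply_apply, fourierBasis_repr,
      fourierCoeff_congr' (MemLp.coeFn_toLp hfc) n, fourierCoeff_conj']
    simp
  have hGb : ∀ n : ℤ, ⟪fourierBasis n, G⟫_ℂ = fourierCoeff g n := by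
    intro n
    rw [← fourierBasis.repr_apply_apply, fourierBasis_repr,
      fourierCoeff_congr' (MemLp.coeFn_toLp hg) n]
  have hFG : ⟪F, G⟫_ℂ = ∫ x, f x * g x ∂μT := by
    rw [MeasureTheory.L2.inner_def]
    refine integral_congr_ae ?_
    filter_upwards [MemLp.coeFn_toLp hfc, MemLp.coeFn_toLp hg] with x h1 h2
    rw [h1, h2, RCLike.inner_apply]
    simp
    ring
  simp only [hFb, hGb, hFG] at key; exact key

lemma fourierCoeff_one' (n : ℤ) :
    fourierCoeff (fun _ : Torus => (1 : ℂ)) n = if n = 0 then 1 else 0 := by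
  have h : fourierCoeff (fun _ : Torus => (1 : ℂ)) n
      = ⟪fourierLp (T := 2 * Real.pi) 2 n, fourierLp 2 0⟫_ℂ := by
    rw [MeasureTheory.L2.inner_def, fourierCoeff]
    refine integral_congr_ae ?_
    filter_upwards [coeFn_fourierLp (T := 2 * Real.pi) 2 n,
      coeFn_fourierLp (T := 2 * Real.pi) 2 0] with x h1 h2
    rw [h1, h2, RCLike.inner_apply, fourier_zero, ← fourier_neg]
    simp [smul_eq_mul]
  rw [h, orthonormal_iff_ite.mp orthonormal_fourier n 0]

lemma fourierCoeff_const' (c : ℂ) (n : ℤ) :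
    fourierCoeff (fun _ : Torus => c) n = if n = 0 then c else 0 := by
  have h := fourierCoeff.const_mul (fun _ : Torus => (1 : ℂ)) c n
  simpa [fourierCoeff_one', mul_ite, mul_one, mul_zero] using h

variable {d : ℕ}

lemma mcoeff_congr' {f g : Torus → Mat d} (h : ∀ᵐ x ∂μT, f x = g x) (n : ℤ) :
    mcoeff f n = mcoeff g n := by
  ext i j
  exact fourierCoeff_congr' (h.mono fun x hx => by rw [hx]) n

lemma mcoeff_one' (n : ℤ) :
    mcoeff (fun _ : Torus => (1 : Mat d)) n = if n = 0 then 1 else 0 := by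
  ext i j
  rw [mcoeff, Matrix.of_apply, fourierCoeff_const']
  split_ifs <;> simp

lemma mint_eq_mcoeff_zero' (f : Torus → Mat d) : mint f = mcoeff f 0 := by
  ext i j
  rw [mint, mcoeff, Matrix.of_apply, Matrix.of_apply, fourierCoeff_zero'']

end AuxHelpers

/-- With the measure of `𝕋` normalized to total mass 1 and `U ∈ H²(𝕋, ℂ^{d×d})`
Hermitian-valued, one has
`𝓜₋₁(U) = ∫ L_U(𝟏) = -⟨U⟩` and `𝓜₀(U) = ∫ L_U²(𝟏) = ½⟨U² - iUHU⟩ + ½⟨U⟩²`. -/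

theorem M_minus_one_and_M_zero {d : ℕ} (hd : 1 ≤ d)
    (U : Torus → Mat d) (hU : InHk 2 U) (hH : IsHermitianValued U) :
    (∀ L1 : Torus → Mat d, LaxOf U (fun _ => (1 : Mat d)) L1 →
        mint L1 = - mint U) ∧
    (∀ L1 L2 hu : Torus → Mat d,
        LaxOf U (fun _ => (1 : Mat d)) L1 → LaxOf U L1 L2 → HilbertOf U hu →
        mint L2 = (2 : ℂ)⁻¹ •
          (mint (fun x => U x * U x - Complex.I • (U x * hu x)) + mint U ^ 2)) := by
  obtain ⟨hUL2, -⟩ := hU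
  have hstruct : ∀ L1 : Torus → Mat d, LaxOf U (fun _ => (1 : Mat d)) L1 →
      InL2 L1 ∧ ∀ n : ℤ, mcoeff L1 n = -(if 0 ≤ n then mcoeff U n else 0) := by
    intro L1 h
    obtain ⟨df, tf, hdf, htf, hae⟩ := h
    have hdfc : ∀ n : ℤ, mcoeff df n = 0 := by
      intro n
      rw [hdf.2 n, mcoeff_one']
      rcases eq_or_ne n 0 with h0 | h0 <;> simp [h0]
    have htfc : ∀ n : ℤ, mcoeff tf n = if 0 ≤ n then mcoeff U n else 0 := by
      intro n
      rw [htf.2 n]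
      simp only [mul_one]
    constructor
    · intro i j
      exact ((hdf.1 i j).sub (htf.1 i j)).ae_eq
        (hae.mono fun x hx => by simp only [Pi.sub_apply]; rw [hx, Matrix.sub_apply])
    · intro n
      have hsub : mcoeff L1 n = mcoeff df n - mcoeff tf n := by
        rw [mcoeff_congr' hae n]
        ext i j
        simp only [mcoeff, Matrix.of_apply, Matrix.sub_apply]
        exact fourierCoeff_sub' ((hdf.1 i j).integrable one_le_two)
          ((htf.1 i j).integrable one_le_two) n
      rw [hsub, hdfc, htfc, zero_sub]
  refine ⟨?_, ?_⟩
  · intro L1 h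
    obtain ⟨-, hc⟩ := hstruct L1 h
    rw [mint_eq_mcoeff_zero' L1, mint_eq_mcoeff_zero' U, hc 0]
    simp
  · intro L1 L2 hu h1 h2 hhu
    obtain ⟨hL1L2, hc⟩ := hstruct L1 h1
    obtain ⟨df, tf, hdf, htf, hae⟩ := h2
    -- entrywise coefficients of hu and L1
    have hhc : ∀ (n : ℤ) (k l : Fin d), fourierCoeff (fun x => hu x k l) n
        = (Complex.I * ((n.sign : ℤ) : ℂ)) * fourierCoeff (fun x => U x k l) n := by
      intro n k l
      have h := congr_fun (congr_fun (hhu.2 n) k) l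
      simpa [mcoeff, Matrix.smul_apply, smul_eq_mul] using h
    have hL1c : ∀ (n : ℤ) (k l : Fin d), fourierCoeff (fun x => L1 x k l) n
        = -(if 0 ≤ n then fourierCoeff (fun x => U x k l) n else 0) := by
      intro n k l
      have h := congr_fun (congr_fun (hc n) k) l
      simpa [mcoeff, Matrix.neg_apply, apply_ite (fun M : Mat d => M k l)] using h
    -- mint L2 = - mcoeff (U * L1) 0
    have key : mint L2 = - mcoeff (fun x => U x * L1 x) 0 := by
      have hd0 : mcoeff df 0 = 0 := by
        rw [hdf.2 0]
        simp
      have ht0 : mcoeff tf 0 = mcoeff (fun x => U x * L1 x) 0 := by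
        rw [htf.2 0]
        simp
      have hsub : mcoeff L2 0 = mcoeff df 0 - mcoeff tf 0 := by
        rw [mcoeff_congr' hae 0]
        ext i j
        simp only [mcoeff, Matrix.of_apply, Matrix.sub_apply]
        exact fourierCoeff_sub' ((hdf.1 i j).integrable one_le_two)
          ((htf.1 i j).integrable one_le_two) 0
      rw [mint_eq_mcoeff_zero' L2, hsub, hd0, ht0, zero_sub]
    rw [key]
    ext i j
    simp only [Matrix.neg_apply, Matrix.smul_apply, Matrix.add_apply, smul_eq_mul]
    -- the key per-index identity
    have hkey : ∀ k : Fin d, ∫ x, U x i k * L1 x k j ∂μT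
        = -(2:ℂ)⁻¹ * ((∫ x, U x i k * U x k j ∂μT)
            - Complex.I * ∫ x, U x i k * hu x k j ∂μT
            + fourierCoeff (fun x => U x i k) 0 * fourierCoeff (fun x => U x k j) 0) := by
      intro k
      have hA := hasSum_fourier_mul' (hUL2 i k) (hUL2 k j)
      have hB := hasSum_fourier_mul' (hUL2 i k) (hhu.1 k j)
      have hC := hasSum_fourier_mul' (hUL2 i k) (hL1L2 k j)
      have hD : HasSum (fun n : ℤ => if n = 0 then
            fourierCoeff (fun x => U x i k) 0 * fourierCoeff (fun x => U x k j) 0 else 0)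
          (fourierCoeff (fun x => U x i k) 0 * fourierCoeff (fun x => U x k j) 0) :=
        hasSum_ite_eq 0 _
      have hcomb := (hA.add (hB.mul_left (-Complex.I))).add hD
      have hC2 := hC.mul_left (-2 : ℂ)
      have hfun : (fun n : ℤ =>
            (fourierCoeff (fun x => U x i k) (-n) * fourierCoeff (fun x => U x k j) n
              + -Complex.I * (fourierCoeff (fun x => U x i k) (-n)
                  * fourierCoeff (fun x => hu x k j) n))
            + (if n = 0 then
                fourierCoeff (fun x => U x i k) 0 * fourierCoeff (fun x => U x k j) 0 else 0))
          = fun n : ℤ => (-2:ℂ) * (fourierCoeff (fun x => U x i k) (-n)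
              * fourierCoeff (fun x => L1 x k j) n) := by
        funext n
        rw [hhc n k j, hL1c n k j]
        rcases lt_trichotomy n 0 with hn | hn | hn
        · rw [Int.sign_eq_neg_one_iff_neg.mpr hn, if_neg hn.ne, if_neg (not_le.mpr hn)]
          push_cast
          linear_combination (fourierCoeff (fun x => U x i k) (-n)
            * fourierCoeff (fun x => U x k j) n) * Complex.I_mul_I
        · subst hn
          simp only [Int.sign_zero, Int.cast_zero, if_pos rfl, le_refl, if_pos, neg_zero]
          push_cast
          ring
        · rw [Int.sign_eq_one_iff_pos.mpr hn, if_neg hn.ne', if_pos hn.le]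
          push_cast
          linear_combination -(fourierCoeff (fun x => U x i k) (-n)
            * fourierCoeff (fun x => U x k j) n) * Complex.I_mul_I
      rw [hfun] at hcomb
      have huniq := hC2.unique hcomb
      linear_combination (-(2:ℂ)⁻¹) * huniq
    -- rewrite all matrix entries as sums of integrals
    have hLHS : mcoeff (fun x => U x * L1 x) 0 i j
        = ∑ k, ∫ x, U x i k * L1 x k j ∂μT := by
      rw [mcoeff, Matrix.of_apply, fourierCoeff_zero'']
      calc ∫ x, (U x * L1 x) i j ∂μT
          = ∫ x, ∑ k, U x i k * L1 x k j ∂μT := by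
            refine integral_congr_ae (Filter.Eventually.of_forall fun x => ?_)
            dsimp only
            rw [Matrix.mul_apply]
        _ = ∑ k, ∫ x, U x i k * L1 x k j ∂μT :=
            integral_finset_sum _ fun k _ => integrable_mul_L2' (hUL2 i k) (hL1L2 k j)
    have hRA : mint (fun x => U x * U x - Complex.I • (U x * hu x)) i j
        = (∑ k, ∫ x, U x i k * U x k j ∂μT)
          - Complex.I * ∑ k, ∫ x, U x i k * hu x k j ∂μT := by
      rw [mint, Matrix.of_apply]
      calc ∫ x, (U x * U x - Complex.I • (U x * hu x)) i j ∂μT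
          = ∫ x, ((∑ k, U x i k * U x k j)
              - Complex.I * ∑ k, U x i k * hu x k j) ∂μT := by
            refine integral_congr_ae (Filter.Eventually.of_forall fun x => ?_)
            simp [Matrix.sub_apply, Matrix.smul_apply, Matrix.mul_apply, smul_eq_mul,
              Finset.mul_sum]
        _ = (∫ x, ∑ k, U x i k * U x k j ∂μT)
              - ∫ x, Complex.I * ∑ k, U x i k * hu x k j ∂μT :=
            integral_sub
              (integrable_finset_sum _ fun k _ => integrable_mul_L2' (hUL2 i k) (hUL2 k j))
              ((integrable_finset_sum _ fun k _ =>
                integrable_mul_L2' (hUL2 i k) (hhu.1 k j)).const_mul _)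
        _ = (∑ k, ∫ x, U x i k * U x k j ∂μT)
              - Complex.I * ∑ k, ∫ x, U x i k * hu x k j ∂μT := by
            rw [integral_finset_sum _ fun k _ => integrable_mul_L2' (hUL2 i k) (hUL2 k j),
              integral_const_mul,
              integral_finset_sum _ fun k _ => integrable_mul_L2' (hUL2 i k) (hhu.1 k j)]
    have hRP : (mint U ^ 2) i j
        = ∑ k, fourierCoeff (fun x => U x i k) 0 * fourierCoeff (fun x => U x k j) 0 := by
      rw [sq, Matrix.mul_apply]
      refine Finset.sum_congr rfl fun k _ => ?_
      rw [mint, Matrix.of_apply, Matrix.of_apply, fourierCoeff_zero'', fourierCoeff_zero'']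
    rw [hLHS, hRA, hRP, Finset.sum_congr rfl fun k _ => hkey k]
    simp only [Finset.sum_add_distrib, Finset.sum_sub_distrib, ← Finset.sum_neg_distrib,
      Finset.mul_sum, neg_mul, neg_neg]
    ring_nf
    simp only [Finset.sum_add_distrib, Finset.sum_mul]
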